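/- Let Q₁, …, Q_m be orthogonal projections where each Qᵢ commutes with all but at most g of the others, and H = Σᵢ Qᵢ frustration-free with gap Δ(H). Then for any unit vector ψ orthogonal to the ground space, ‖∏ᵢ(𝟙 − Qᵢ) ψ‖ ≤ (Δ(H)/g² + 1)^{−1/2}. -/

import Mathlib

open Matrix
noncomputable section

/-- Euclidean norm of a vector in `ℂ^N`. -/
def vnorm {N : ℕ} (v : Fin N → ℂ) : ℝ := Real.sqrt (∑ i, ‖v i‖ ^ 2)

namespace DetectAux
variable {N : ℕ}

def eu (v : Fin N → ℂ) : EuclideanSpace ℂ (Fin N) := (WithLp.equiv 2 _).symm v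

lemma vnorm_eq_norm (v : Fin N → ℂ) : vnorm v = ‖eu v‖ := by
  rw [vnorm, EuclideanSpace.norm_eq]; rfl

lemma inner_eu (u v : Fin N → ℂ) : (inner ℂ (eu u) (eu v) : ℂ) = star u ⬝ᵥ v :=
  (EuclideanSpace.inner_toLp_toLp u v).trans (dotProduct_comm _ _)

lemma dot_mulVec_herm (A : Matrix (Fin N) (Fin N) ℂ) (hA : Aᴴ = A) (u w : Fin N → ℂ) :
    star u ⬝ᵥ (A *ᵥ w) = star (A *ᵥ u) ⬝ᵥ w := by
  rw [star_mulVec, dotProduct_mulVec, hA]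

lemma inner_eu_mulVec (A : Matrix (Fin N) (Fin N) ℂ) (u v : Fin N → ℂ) :
    (inner ℂ (eu (A *ᵥ u)) (eu v) : ℂ) = inner ℂ (eu u) (eu (Aᴴ *ᵥ v)) := by
  rw [inner_eu, inner_eu, star_mulVec, dotProduct_mulVec]

lemma norm_sq_proj (P : Matrix (Fin N) (Fin N) ℂ) (hP : Pᴴ = P) (hP2 : P * P = P)
    (v : Fin N → ℂ) : ‖eu (P *ᵥ v)‖ ^ 2 = RCLike.re (inner ℂ (eu v) (eu (P *ᵥ v)) : ℂ) := by
  rw [← inner_self_eq_norm_sq (𝕜 := ℂ)]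
  congr 1
  rw [inner_eu_mulVec, hP, mulVec_mulVec, hP2]

lemma pyth (P : Matrix (Fin N) (Fin N) ℂ) (hP : Pᴴ = P) (hP2 : P * P = P) (v : Fin N → ℂ) :
    ‖eu (P *ᵥ v)‖ ^ 2 + ‖eu ((1 - P) *ᵥ v)‖ ^ 2 = ‖eu v‖ ^ 2 := by
  have h1 : (1 - P)ᴴ = 1 - P := by rw [conjTranspose_sub, conjTranspose_one, hP]
  have h2 : (1 - P) * (1 - P) = 1 - P := by
    have e : (1 - P) * (1 - P) = 1 - P - P + P * P := by noncomm_ring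
    rw [e, hP2]; abel
  have hv : P *ᵥ v + (1 - P) *ᵥ v = v := by
    rw [sub_mulVec, one_mulVec]; abel
  have hsum : eu (P *ᵥ v) + eu ((1 - P) *ᵥ v) = eu v := by
    show eu (P *ᵥ v + (1 - P) *ᵥ v) = eu v
    rw [hv]
  rw [norm_sq_proj P hP hP2 v, norm_sq_proj _ h1 h2 v, ← map_add, ← inner_add_right, hsum]
  exact inner_self_eq_norm_sq (eu v)

lemma norm_proj_le (P : Matrix (Fin N) (Fin N) ℂ) (hP : Pᴴ = P) (hP2 : P * P = P)
    (v : Fin N → ℂ) : ‖eu (P *ᵥ v)‖ ≤ ‖eu v‖ := by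
  have h := pyth P hP hP2 v
  nlinarith [norm_nonneg (eu (P *ᵥ v)), norm_nonneg (eu v), sq_nonneg ‖eu ((1 - P) *ᵥ v)‖]

lemma norm_Q_eq (P : Matrix (Fin N) (Fin N) ℂ) (hP : Pᴴ = P) (hP2 : P * P = P)
    (v : Fin N → ℂ) :
    ‖eu (P *ᵥ v)‖ = Real.sqrt (‖eu v‖ ^ 2 - ‖eu ((1 - P) *ᵥ v)‖ ^ 2) := by
  have h := pyth P hP hP2 v
  rw [show ‖eu v‖ ^ 2 - ‖eu ((1 - P) *ᵥ v)‖ ^ 2 = ‖eu (P *ᵥ v)‖ ^ 2 by linarith,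
    Real.sqrt_sq (norm_nonneg _)]

lemma sum_mulVec' {m : ℕ} (Q : Fin m → Matrix (Fin N) (Fin N) ℂ) (v : Fin N → ℂ) :
    (∑ i, Q i) *ᵥ v = ∑ i, Q i *ᵥ v := by
  ext j
  simp only [mulVec, dotProduct, Matrix.sum_apply, Finset.sum_apply, Finset.sum_mul]
  rw [Finset.sum_comm]

lemma mul_conj' (z : ℂ) : (starRingEnd ℂ) z * z = (‖z‖ ^ 2 : ℝ) := by
  rw [mul_comm, Complex.mul_conj]
  rw [Complex.normSq_eq_norm_sq]

end DetectAux

open DetectAux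

theorem stmt7 {N m : ℕ} (Q : Fin m → Matrix (Fin N) (Fin N) ℂ)
    (hherm : ∀ i, (Q i).IsHermitian) (hproj : ∀ i, Q i * Q i = Q i)
    (g : ℕ) (hg : 0 < g)
    (hcomm : ∀ i, (Finset.univ.filter (fun j => Q i * Q j ≠ Q j * Q i)).card ≤ g)
    (H : Matrix (Fin N) (Fin N) ℂ) (hH : H = ∑ i, Q i)
    (Δ : ℝ) (hΔmem : (Δ : ℂ) ∈ spectrum ℂ H) (hΔpos : 0 < Δ)
    (hΔmin : ∀ μ : ℝ, (μ : ℂ) ∈ spectrum ℂ H → μ ≠ 0 → Δ ≤ μ)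
    (ψ : Fin N → ℂ) (hψ : vnorm ψ = 1)
    (horth : ∀ φ : Fin N → ℂ, H.mulVec φ = 0 → star φ ⬝ᵥ ψ = 0) :
    vnorm ((((List.finRange m).map (fun i => (1 : Matrix (Fin N) (Fin N) ℂ) - Q i)).prod).mulVec ψ)
      ≤ Real.sqrt (1 / (Δ / (g : ℝ) ^ 2 + 1)) := by
  classical
  set f : Fin m → Matrix (Fin N) (Fin N) ℂ := fun i => 1 - Q i with hf
  have hQh : ∀ i, (Q i)ᴴ = Q i := fun i => hherm i
  have hfh : ∀ i, (f i)ᴴ = f i := fun i => by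
    rw [hf]; simp only []; rw [conjTranspose_sub, conjTranspose_one, hQh]
  have hfp : ∀ i, f i * f i = f i := fun i => by
    show (1 - Q i) * (1 - Q i) = 1 - Q i
    have e : (1 - Q i) * (1 - Q i) = 1 - Q i - Q i + Q i * Q i := by noncomm_ring
    rw [e, hproj]; abel
  have hQf : ∀ i, Q i * f i = 0 := fun i => by
    show Q i * (1 - Q i) = 0
    rw [mul_sub, mul_one, hproj, sub_self]
  -- the partial products
  set χ : ℕ → (Fin N → ℂ) := fun k => (((List.finRange m).drop k).map f).prod *ᵥ ψ with hχ
  have hχm : χ m = ψ := by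
    rw [hχ]; simp only []
    rw [show (List.finRange m).drop m = [] by simp, List.map_nil, List.prod_nil, one_mulVec]
  have hχs : ∀ k (h : k < m), χ k = f ⟨k, h⟩ *ᵥ χ (k + 1) := by
    intro k h
    rw [hχ]; simp only []
    rw [show (List.finRange m).drop k = (⟨k, h⟩ : Fin m) :: (List.finRange m).drop (k+1) by
      rw [List.drop_eq_getElem_cons (by simpa using h)]; simp]
    rw [List.map_cons, List.prod_cons, ← mulVec_mulVec]
  -- notation
  set n2 : ℕ → ℝ := fun k => ‖eu (χ k)‖ ^ 2 with hn2
  set dd : ℕ → ℝ := fun k => Real.sqrt (n2 (k + 1) - n2 k) with hdd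
  have hmono : ∀ k, k < m → n2 k ≤ n2 (k + 1) := by
    intro k h
    rw [hn2]; simp only []
    rw [hχs k h]
    have := norm_proj_le (f ⟨k, h⟩) (hfh _) (hfp _) (χ (k + 1))
    nlinarith [norm_nonneg (eu (f ⟨k, h⟩ *ᵥ χ (k + 1))), norm_nonneg (eu (χ (k + 1)))]
  have hdd_nonneg : ∀ k, 0 ≤ dd k := fun k => Real.sqrt_nonneg _
  have hdd_sq : ∀ k, k < m → dd k ^ 2 = n2 (k + 1) - n2 k := by
    intro k h
    rw [hdd]; simp only []
    rw [Real.sq_sqrt (by linarith [hmono k h])]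
  -- the "bad" sets
  set B : Fin m → Finset (Fin m) :=
    fun i => Finset.univ.filter (fun k => k < i ∧ Q i * Q k ≠ Q k * Q i) with hB
  have hQχi : ∀ i : Fin m, Q i *ᵥ χ i.val = 0 := by
    intro i
    rw [hχs i.val i.isLt, Fin.eta, mulVec_mulVec, hQf i, zero_mulVec]
  have key : ∀ i : Fin m, ‖eu (Q i *ᵥ χ 0)‖ ≤ ∑ k ∈ B i, dd k.val := by
    intro i
    suffices h : ∀ s t, t ≤ i.val → i.val - t ≤ s →
        ‖eu (Q i *ᵥ χ t)‖ ≤ ∑ k ∈ (B i).filter (fun k => t ≤ k.val), dd k.val by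
      have h0 := h i.val 0 (Nat.zero_le _) (by omega)
      simpa using h0
    intro s
    induction s with
    | zero =>
      intro t ht hs
      have : t = i.val := by omega
      subst this
      rw [hQχi i]
      simpa [eu] using Finset.sum_nonneg (fun k _ => hdd_nonneg k.val)
    | succ s ih =>
      intro t ht hs
      rcases eq_or_lt_of_le ht with heq | hlt
      · subst heq
        rw [hQχi i]
        simpa [eu] using Finset.sum_nonneg (fun k _ => hdd_nonneg k.val)
      · have htm : t < m := lt_trans hlt i.isLt
        set kf : Fin m := ⟨t, htm⟩ with hkf
        have hsplit := hχs t htm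
        have hstep := ih (t + 1) hlt (by omega)
        have hsubset : (B i).filter (fun k => t + 1 ≤ k.val) ⊆ (B i).filter (fun k => t ≤ k.val) :=
          Finset.monotone_filter_right _ (fun k _ hk => Nat.le_of_succ_le hk)
        have hsum_mono : ∑ k ∈ (B i).filter (fun k => t + 1 ≤ k.val), dd k.val
            ≤ ∑ k ∈ (B i).filter (fun k => t ≤ k.val), dd k.val :=
          Finset.sum_le_sum_of_subset_of_nonneg hsubset (fun k _ _ => hdd_nonneg k.val)
        by_cases hc : Q i * Q kf = Q kf * Q i
        · -- commuting case: push through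
          have hmm : Q i * f kf = f kf * Q i := by
            show Q i * (1 - Q kf) = (1 - Q kf) * Q i
            rw [mul_sub, sub_mul, mul_one, one_mul, hc]
          have hpush : Q i *ᵥ χ t = f kf *ᵥ (Q i *ᵥ χ (t + 1)) := by
            calc Q i *ᵥ χ t = Q i *ᵥ (f kf *ᵥ χ (t + 1)) := by rw [hsplit]
              _ = (Q i * f kf) *ᵥ χ (t + 1) := mulVec_mulVec _ _ _
              _ = (f kf * Q i) *ᵥ χ (t + 1) := by rw [hmm]
              _ = f kf *ᵥ (Q i *ᵥ χ (t + 1)) := (mulVec_mulVec _ _ _).symm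
          calc ‖eu (Q i *ᵥ χ t)‖ = ‖eu (f kf *ᵥ (Q i *ᵥ χ (t + 1)))‖ := by rw [hpush]
            _ ≤ ‖eu (Q i *ᵥ χ (t + 1))‖ := norm_proj_le _ (hfh kf) (hfp kf) _
            _ ≤ _ := le_trans hstep hsum_mono
        · -- non-commuting case
          have hkfB : kf ∈ B i := by
            rw [hB]
            simp only [Finset.mem_filter, Finset.mem_univ, true_and]
            exact ⟨hlt, hc⟩
          have hdecomp : Q i *ᵥ χ t = Q i *ᵥ χ (t + 1) - Q i *ᵥ (Q kf *ᵥ χ (t + 1)) := by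
            rw [hsplit]
            rw [show f kf *ᵥ χ (t + 1) = χ (t + 1) - Q kf *ᵥ χ (t + 1) by
              show (1 - Q kf) *ᵥ χ (t + 1) = _
              rw [sub_mulVec, one_mulVec]]
            rw [mulVec_sub]
          have hterm : ‖eu (Q i *ᵥ (Q kf *ᵥ χ (t + 1)))‖ ≤ dd t := by
            have h1 : ‖eu (Q i *ᵥ (Q kf *ᵥ χ (t + 1)))‖ ≤ ‖eu (Q kf *ᵥ χ (t + 1))‖ :=
              norm_proj_le _ (hQh i) (hproj i) _
            have h2 : ‖eu (Q kf *ᵥ χ (t + 1))‖ = dd t := by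
              rw [norm_Q_eq _ (hQh kf) (hproj kf)]
              have hx : (1 - Q kf) *ᵥ χ (t + 1) = χ t := by rw [hsplit]
              rw [hx]
            linarith
          have htri : ‖eu (Q i *ᵥ χ t)‖ ≤ ‖eu (Q i *ᵥ χ (t + 1))‖ +
              ‖eu (Q i *ᵥ (Q kf *ᵥ χ (t + 1)))‖ := by
            rw [hdecomp]
            exact norm_sub_le (eu (Q i *ᵥ χ (t + 1))) (eu (Q i *ᵥ (Q kf *ᵥ χ (t + 1))))
          have hset : (B i).filter (fun k => t ≤ k.val)
              = insert kf ((B i).filter (fun k => t + 1 ≤ k.val)) := by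
            ext k
            simp only [Finset.mem_filter, Finset.mem_insert]
            constructor
            · rintro ⟨hkB, hkt⟩
              rcases eq_or_lt_of_le hkt with he | hl
              · exact Or.inl (Fin.ext he.symm)
              · exact Or.inr ⟨hkB, hl⟩
            · rintro (rfl | ⟨hkB, hkt⟩)
              · exact ⟨hkfB, le_refl _⟩
              · exact ⟨hkB, by omega⟩
          have hnotmem : kf ∉ (B i).filter (fun k => t + 1 ≤ k.val) := by
            simp only [Finset.mem_filter]
            rintro ⟨-, hk⟩
            change t + 1 ≤ t at hk
            omega
          rw [hset, Finset.sum_insert hnotmem]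
          calc ‖eu (Q i *ᵥ χ t)‖
              ≤ ‖eu (Q i *ᵥ χ (t + 1))‖ + ‖eu (Q i *ᵥ (Q kf *ᵥ χ (t + 1)))‖ := htri
            _ ≤ (∑ k ∈ (B i).filter (fun k => t + 1 ≤ k.val), dd k.val) + dd t := by
                exact add_le_add hstep hterm
            _ = dd kf.val + ∑ k ∈ (B i).filter (fun k => t + 1 ≤ k.val), dd k.val := by
                rw [add_comm]
  -- abbreviation for the detectability operator output
  set φ : Fin N → ℂ := χ 0 with hφ
  -- per-projector squared bound
  have hsq : ∀ i : Fin m, ‖eu (Q i *ᵥ φ)‖ ^ 2 ≤ (g : ℝ) * ∑ k ∈ B i, dd k.val ^ 2 := by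
    intro i
    have h1 : ‖eu (Q i *ᵥ φ)‖ ^ 2 ≤ (∑ k ∈ B i, dd k.val) ^ 2 :=
      pow_le_pow_left₀ (norm_nonneg _) (key i) 2
    have h2 : (∑ k ∈ B i, dd k.val) ^ 2 ≤ ((B i).card : ℝ) * ∑ k ∈ B i, dd k.val ^ 2 :=
      sq_sum_le_card_mul_sum_sq
    have hcard : ((B i).card : ℝ) ≤ (g : ℝ) := by
      have hsub : B i ⊆ Finset.univ.filter (fun j => Q i * Q j ≠ Q j * Q i) :=
        Finset.monotone_filter_right _ (fun k _ hk => hk.2)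
      exact_mod_cast le_trans (Finset.card_le_card hsub) (hcomm i)
    have h3 : ((B i).card : ℝ) * ∑ k ∈ B i, dd k.val ^ 2
        ≤ (g : ℝ) * ∑ k ∈ B i, dd k.val ^ 2 :=
      mul_le_mul_of_nonneg_right hcard (Finset.sum_nonneg fun k _ => sq_nonneg _)
    linarith
  -- double counting / telescoping
  have hteles : ∑ k : Fin m, dd k.val ^ 2 = 1 - ‖eu φ‖ ^ 2 := by
    rw [Fin.sum_univ_eq_sum_range (fun k => dd k ^ 2) m]
    rw [Finset.sum_congr rfl (fun k hk => hdd_sq k (Finset.mem_range.mp hk))]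
    rw [Finset.sum_range_sub n2]
    have h1 : n2 m = 1 := by
      show ‖eu (χ m)‖ ^ 2 = 1
      rw [hχm, ← vnorm_eq_norm, hψ]; norm_num
    rw [h1]
  -- total energy bound
  have hS : ∑ i : Fin m, ‖eu (Q i *ᵥ φ)‖ ^ 2 ≤ (g : ℝ) ^ 2 * (1 - ‖eu φ‖ ^ 2) := by
    have e1 : ∀ i : Fin m, ∑ k ∈ B i, dd k.val ^ 2
        = ∑ k : Fin m, if k < i ∧ Q i * Q k ≠ Q k * Q i then dd k.val ^ 2 else 0 := by
      intro i
      rw [hB]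
      exact Finset.sum_filter _ _
    have e2 : ∀ k : Fin m,
        (∑ i : Fin m, if k < i ∧ Q i * Q k ≠ Q k * Q i then dd k.val ^ 2 else 0)
        = ((Finset.univ.filter (fun i : Fin m => k < i ∧ Q i * Q k ≠ Q k * Q i)).card : ℝ)
            * dd k.val ^ 2 := by
      intro k
      rw [← Finset.sum_filter, Finset.sum_const, nsmul_eq_mul]
    have e3 : ∀ k : Fin m,
        ((Finset.univ.filter (fun i : Fin m => k < i ∧ Q i * Q k ≠ Q k * Q i)).card : ℝ)
          ≤ (g : ℝ) := by
      intro k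
      have hsub : Finset.univ.filter (fun i : Fin m => k < i ∧ Q i * Q k ≠ Q k * Q i)
          ⊆ Finset.univ.filter (fun j => Q k * Q j ≠ Q j * Q k) :=
        Finset.monotone_filter_right _ (fun i _ hi => fun e => hi.2 e.symm)
      exact_mod_cast le_trans (Finset.card_le_card hsub) (hcomm k)
    calc ∑ i : Fin m, ‖eu (Q i *ᵥ φ)‖ ^ 2
        ≤ ∑ i : Fin m, (g : ℝ) * ∑ k ∈ B i, dd k.val ^ 2 :=
          Finset.sum_le_sum (fun i _ => hsq i)
      _ = (g : ℝ) * ∑ i : Fin m, ∑ k ∈ B i, dd k.val ^ 2 := by rw [Finset.mul_sum]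
      _ = (g : ℝ) * ∑ k : Fin m,
            ((Finset.univ.filter (fun i : Fin m => k < i ∧ Q i * Q k ≠ Q k * Q i)).card : ℝ)
              * dd k.val ^ 2 := by
          rw [Finset.sum_congr rfl (fun i _ => e1 i), Finset.sum_comm]
          rw [Finset.sum_congr rfl (fun k _ => e2 k)]
      _ ≤ (g : ℝ) * ∑ k : Fin m, (g : ℝ) * dd k.val ^ 2 := by
          apply mul_le_mul_of_nonneg_left _ (by positivity)
          exact Finset.sum_le_sum fun k _ =>
            mul_le_mul_of_nonneg_right (e3 k) (sq_nonneg _)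
      _ = (g : ℝ) ^ 2 * ∑ k : Fin m, dd k.val ^ 2 := by
          rw [← Finset.mul_sum]; ring
      _ = (g : ℝ) ^ 2 * (1 - ‖eu φ‖ ^ 2) := by rw [hteles]
  -- Hermiticity of H
  have hHh : H.IsHermitian := by
    rw [hH]
    show (∑ i, Q i)ᴴ = ∑ i, Q i
    rw [conjTranspose_sum]
    exact Finset.sum_congr rfl fun i _ => hQh i
  have hHc : Hᴴ = H := hHh
  -- decomposition of the energy
  have hHdecomp : ∀ u : Fin N → ℂ,
      (inner ℂ (eu u) (eu (H *ᵥ u)) : ℂ) = ∑ j, inner ℂ (eu u) (eu (Q j *ᵥ u)) := by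
    intro u
    rw [hH, sum_mulVec']
    rw [show eu (∑ j, Q j *ᵥ u) = ∑ j, eu (Q j *ᵥ u) from map_sum (WithLp.addEquiv 2 (Fin N → ℂ)).symm _ _]
    exact inner_sum _ _ _
  have henergy : ∀ u : Fin N → ℂ,
      RCLike.re (inner ℂ (eu u) (eu (H *ᵥ u)) : ℂ) = ∑ j, ‖eu (Q j *ᵥ u)‖ ^ 2 := by
    intro u
    rw [hHdecomp u, map_sum]
    exact Finset.sum_congr rfl fun j _ => (norm_sq_proj (Q j) (hQh j) (hproj j) u).symm
  -- vectors in the kernel are killed by each Q i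
  have hkerQ : ∀ u : Fin N → ℂ, H *ᵥ u = 0 → ∀ i, Q i *ᵥ u = 0 := by
    intro u hu i
    have hiz : (inner ℂ (eu u) (eu (H *ᵥ u)) : ℂ) = 0 := by
      rw [hu]
      exact inner_zero_right _
    have hsum0 : ∑ j, ‖eu (Q j *ᵥ u)‖ ^ 2 = 0 := by
      rw [← henergy u, hiz]; simp
    have hz : ‖eu (Q i *ᵥ u)‖ ^ 2 = 0 :=
      (Finset.sum_eq_zero_iff_of_nonneg (fun j _ => sq_nonneg _)).mp hsum0 i (Finset.mem_univ i)
    have : eu (Q i *ᵥ u) = 0 := by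
      rw [← norm_eq_zero]
      exact pow_eq_zero_iff (n := 2) (by norm_num) |>.mp hz
    exact (WithLp.equiv 2 _).symm.injective this
  -- φ stays orthogonal to the kernel
  have hkerdot : ∀ u : Fin N → ℂ, H *ᵥ u = 0 → star u ⬝ᵥ φ = 0 := by
    intro u hu
    have hlist : ∀ L : List (Fin m), star u ⬝ᵥ ((L.map f).prod *ᵥ ψ) = star u ⬝ᵥ ψ := by
      intro L
      induction L with
      | nil => rw [List.map_nil, List.prod_nil, one_mulVec]
      | cons a L ih =>
        rw [List.map_cons, List.prod_cons, ← mulVec_mulVec]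
        rw [dot_mulVec_herm (f a) (hfh a)]
        have hfu : f a *ᵥ u = u := by
          show (1 - Q a) *ᵥ u = u
          rw [sub_mulVec, one_mulVec, hkerQ u hu a, sub_zero]
        rw [hfu, ih]
    have hphi : star u ⬝ᵥ φ = star u ⬝ᵥ ψ := hlist ((List.finRange m).drop 0)
    rw [hphi]
    exact horth u hu
  -- eigenbasis expansion
  set b := hHh.eigenvectorBasis with hb
  set μ := hHh.eigenvalues with hμ
  have hble : ∀ i, H *ᵥ ⇑(b i) = (μ i : ℂ) • ⇑(b i) := fun i => by
    exact_mod_cast hHh.mulVec_eigenvectorBasis i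
  set c : Fin N → ℂ := fun i => b.repr (eu φ) i with hc
  have hc_inner : ∀ i, c i = inner ℂ (b i) (eu φ) := fun i => b.repr_apply_apply _ _
  have hc0 : ∀ i, μ i = 0 → c i = 0 := by
    intro i h0
    have hker : H *ᵥ ⇑(b i) = 0 := by
      rw [hble i, h0]
      simp
    have hd := hkerdot ⇑(b i) hker
    rw [hc_inner i]
    rw [show (inner ℂ (b i) (eu φ) : ℂ) = star (⇑(b i)) ⬝ᵥ φ from inner_eu _ _]
    exact hd
  have hreprH : ∀ i, b.repr (eu (H *ᵥ φ)) i = (μ i : ℂ) * c i := by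
    intro i
    rw [b.repr_apply_apply]
    have e1 : (inner ℂ (eu (H *ᵥ ⇑(b i))) (eu φ) : ℂ) = inner ℂ (b i) (eu (H *ᵥ φ)) := by
      rw [inner_eu_mulVec, hHc]
      rfl
    rw [← e1, hble i]
    show (inner ℂ ((μ i : ℂ) • eu ⇑(b i)) (eu φ) : ℂ) = _
    rw [inner_smul_left, Complex.conj_ofReal]
    congr 1
    exact (hc_inner i).symm
  have hinner_eig : RCLike.re (inner ℂ (eu φ) (eu (H *ᵥ φ)) : ℂ) = ∑ i, μ i * ‖c i‖ ^ 2 := by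
    have e0 : (inner ℂ (eu φ) (eu (H *ᵥ φ)) : ℂ)
        = ∑ i, (starRingEnd ℂ) (b.repr (eu φ) i) * (b.repr (eu (H *ᵥ φ)) i) := by
      rw [← b.repr.inner_map_map (eu φ) (eu (H *ᵥ φ))]
      rw [EuclideanSpace.inner_eq_star_dotProduct, dotProduct_comm]
      rfl
    have e1 : ∀ i : Fin N, (starRingEnd ℂ) (b.repr (eu φ) i) * (b.repr (eu (H *ᵥ φ)) i)
        = ((μ i * ‖c i‖ ^ 2 : ℝ) : ℂ) := by
      intro i
      rw [hreprH i]
      rw [show (starRingEnd ℂ) (b.repr (eu φ) i) * ((μ i : ℂ) * c i)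
          = (μ i : ℂ) * ((starRingEnd ℂ) (c i) * c i) from by rw [hc]; ring]
      rw [mul_conj']
      push_cast
      ring
    rw [e0, Finset.sum_congr rfl (fun i _ => e1 i), ← Complex.ofReal_sum]
    exact Complex.ofReal_re _
  have hiso : ∑ i, ‖c i‖ ^ 2 = ‖eu φ‖ ^ 2 := by
    have hn : ‖b.repr (eu φ)‖ = ‖eu φ‖ := b.repr.norm_map (eu φ)
    rw [← hn, EuclideanSpace.norm_eq,
      Real.sq_sqrt (Finset.sum_nonneg fun i _ => sq_nonneg _)]
  have hlow : Δ * ‖eu φ‖ ^ 2 ≤ RCLike.re (inner ℂ (eu φ) (eu (H *ᵥ φ)) : ℂ) := by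
    rw [hinner_eig, ← hiso, Finset.mul_sum]
    apply Finset.sum_le_sum
    intro i _
    by_cases h0 : μ i = 0
    · rw [hc0 i h0, h0]
      simp
    · have hspec : ((μ i : ℝ) : ℂ) ∈ spectrum ℂ H := hHh.eigenvalues_mem_spectrum_real i
      have hge := hΔmin (μ i) hspec h0
      nlinarith [sq_nonneg ‖c i‖]
  -- combine
  have hcomb : Δ * ‖eu φ‖ ^ 2 ≤ (g : ℝ) ^ 2 * (1 - ‖eu φ‖ ^ 2) := by
    have := (hlow.trans_eq (henergy φ)).trans hS
    linarith
  have hg2 : (0 : ℝ) < (g : ℝ) ^ 2 := by positivity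
  have hx : ‖eu φ‖ ^ 2 ≤ 1 / (Δ / (g : ℝ) ^ 2 + 1) := by
    have hden : Δ / (g : ℝ) ^ 2 + 1 = (Δ + (g : ℝ) ^ 2) / (g : ℝ) ^ 2 := by
      field_simp
    rw [hden, one_div_div]
    rw [le_div_iff₀ (by positivity)]
    nlinarith [sq_nonneg ‖eu φ‖]
  have hgoal : (((List.finRange m).map f).prod) *ᵥ ψ = φ := by
    rw [hφ, hχ]
    simp only [List.drop_zero]
  rw [show ((List.finRange m).map fun i => 1 - Q i) = (List.finRange m).map f from rfl]
  rw [show (((List.finRange m).map f).prod).mulVec ψ = φ from hgoal]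
  rw [vnorm_eq_norm]
  have := Real.sqrt_le_sqrt hx
  rwa [Real.sqrt_sq (norm_nonneg _)] at this
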